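/- For 1 < p ≤ ∞, the set of sequences (aᵢ) ∈ ℓᵖ such that the series Σ aᵢ diverges is prevalent in ℓᵖ. -/

import Mathlib

open MeasureTheory Set Filter

/-- A subset of a topological vector space is shy if it is contained in a Borel set
admitting a transverse measure. -/
def ShyIn {V : Type*} [TopologicalSpace V] [AddCommGroup V] (S : Set V) : Prop :=
  letI : MeasurableSpace V := borel V
  ∃ T : Set V, S ⊆ T ∧ MeasurableSet T ∧
    ∃ μ : Measure V, (∃ U : Set V, IsCompact U ∧ 0 < μ U ∧ μ U < ⊤) ∧
      ∀ v : V, μ ((fun x => x + v) '' T) = 0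

/-- A set is prevalent if its complement is shy. -/
def PrevalentIn {V : Type*} [TopologicalSpace V] [AddCommGroup V] (S : Set V) : Prop :=
  ShyIn Sᶜ

/-- For `1 < p ≤ ∞`, the set of sequences `a ∈ ℓᵖ` whose series `Σ aᵢ` diverges
(the partial sums have no limit) is prevalent in `ℓᵖ`. -/
theorem stmt_11 (p : ENNReal) (hp : 1 < p) [Fact (1 ≤ p)] :
    PrevalentIn {a : lp (fun _ : ℕ => ℝ) p |
      ¬ ∃ l : ℝ, Tendsto (fun n => ∑ i ∈ Finset.range n, a i) atTop (nhds l)} := by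
  classical
  unfold PrevalentIn ShyIn
  set V := lp (fun _ : ℕ => ℝ) p with hV
  letI : MeasurableSpace V := borel V
  haveI : BorelSpace V := ⟨rfl⟩
  -- the probe vector (1/(i+1))
  have hv : Memℓp (fun i : ℕ => ((i : ℝ) + 1)⁻¹) p := by
    rcases eq_or_ne p ⊤ with h | h
    · rw [h]
      apply memℓp_infty
      refine ⟨1, ?_⟩
      rintro x ⟨i, rfl⟩
      have h1 : (0:ℝ) < (i:ℝ) + 1 := by positivity
      show ‖((i:ℝ) + 1)⁻¹‖ ≤ 1
      rw [Real.norm_eq_abs, abs_of_nonneg (by positivity)]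
      rw [inv_le_one_iff₀]
      right; linarith
    · apply memℓp_gen
      have hq : 1 < p.toReal := by
        have := (ENNReal.toReal_lt_toReal (by simp) h).mpr hp
        simpa using this
      have hs : Summable (fun n : ℕ => 1 / (n : ℝ) ^ p.toReal) :=
        Real.summable_one_div_nat_rpow.mpr hq
      have hs2 := (_root_.summable_nat_add_iff 1).mpr hs
      refine hs2.congr fun i => ?_
      have h1 : (0:ℝ) ≤ (i:ℝ) + 1 := by positivity
      show 1 / ((i + 1 : ℕ) : ℝ) ^ p.toReal = ‖((i:ℝ) + 1)⁻¹‖ ^ p.toReal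
      rw [Real.norm_eq_abs, abs_of_nonneg (by positivity), Real.inv_rpow h1, one_div]
      push_cast
      ring_nf
  set v : V := ⟨fun i : ℕ => ((i : ℝ) + 1)⁻¹, hv⟩ with hv_def
  -- coordinates are continuous
  have hcoord : ∀ i : ℕ, Continuous fun a : V => (a : ℕ → ℝ) i := by
    intro i
    refine (LipschitzWith.of_dist_le_mul fun a b => ?_).continuous (K := 1)
    have : ‖(a - b : V) i‖ ≤ ‖a - b‖ :=
      lp.norm_apply_le_norm (by positivity) (a - b) i
    simpa [dist_eq_norm, lp.coeFn_sub, Pi.sub_apply] using this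
  -- partial sums
  have hsum : ∀ n : ℕ, Continuous fun a : V => ∑ i ∈ Finset.range n, (a : ℕ → ℝ) i := by
    intro n
    exact continuous_finset_sum _ fun i _ => hcoord i
  set T : Set V := {a : V | ∃ l : ℝ, Tendsto (fun n => ∑ i ∈ Finset.range n, (a : ℕ → ℝ) i)
    atTop (nhds l)} with hT
  have hTmeas : MeasurableSet T :=
    measurableSet_exists_tendsto fun n => (hsum n).measurable
  -- the measure: pushforward of Lebesgue on [0,1] along λ ↦ λ • v
  have hf : Continuous fun t : ℝ => t • v := continuous_id.smul continuous_const
  set f : ℝ → V := fun t => t • v with hfdef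
  set μ : Measure V := Measure.map f (volume.restrict (Icc (0:ℝ) 1)) with hμ
  refine ⟨T, ?_, hTmeas, μ, ?_, ?_⟩
  · intro a ha
    simp only [mem_compl_iff, mem_setOf_eq, not_not] at ha
    exact ha
  · -- compact set of positive finite measure
    refine ⟨f '' Icc 0 1, isCompact_Icc.image hf, ?_, ?_⟩
    · have hmeas : MeasurableSet (f '' Icc 0 1) :=
        ((isCompact_Icc.image hf).isClosed).measurableSet
      rw [hμ, Measure.map_apply hf.measurable hmeas, Measure.restrict_apply
        (hf.measurable hmeas)]
      have hsub : Icc (0:ℝ) 1 ⊆ f ⁻¹' (f '' Icc 0 1) ∩ Icc 0 1 :=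
        fun x hx => ⟨Set.subset_preimage_image f _ hx, hx⟩
      calc (0:ENNReal) < volume (Icc (0:ℝ) 1) := by simp
        _ ≤ _ := measure_mono hsub
    · calc μ (f '' Icc 0 1) ≤ μ Set.univ := measure_mono (subset_univ _)
        _ = volume (Icc (0:ℝ) 1) := by
            rw [hμ, Measure.map_apply hf.measurable MeasurableSet.univ]
            simp
        _ < ⊤ := by simp
  · -- transversality
    intro w
    have hA : (fun x => x + w) '' T = (fun x : V => x - w) ⁻¹' T := by
      ext x
      constructor
      · rintro ⟨t, ht, rfl⟩; simpa using ht
      · intro hx; exact ⟨x - w, hx, sub_add_cancel x w⟩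
    have hAmeas : MeasurableSet ((fun x => x + w) '' T) := by
      rw [hA]
      exact hTmeas.preimage (continuous_id.sub continuous_const).measurable
    rw [hμ, Measure.map_apply hf.measurable hAmeas,
      Measure.restrict_apply (hf.measurable hAmeas)]
    -- the preimage is a subsingleton
    have hss : (f ⁻¹' ((fun x => x + w) '' T)).Subsingleton := by
      intro s hs t ht
      rw [hA] at hs ht
      simp only [mem_preimage, hT, mem_setOf_eq] at hs ht
      obtain ⟨l1, hl1⟩ := hs
      obtain ⟨l2, hl2⟩ := ht
      set H : ℕ → ℝ := fun n => ∑ i ∈ Finset.range n, ((i : ℝ) + 1)⁻¹ with hH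
      have hcoe : ∀ (c : ℝ) (n : ℕ),
          ∑ i ∈ Finset.range n, ((c • v - w : V) : ℕ → ℝ) i
            = c * H n - ∑ i ∈ Finset.range n, (w : ℕ → ℝ) i := by
        intro c n
        rw [hH, Finset.mul_sum, ← Finset.sum_sub_distrib]
        refine Finset.sum_congr rfl fun i _ => ?_
        have : ((c • v - w : V) : ℕ → ℝ) i = c * ((i:ℝ)+1)⁻¹ - (w : ℕ → ℝ) i := by
          rw [lp.coeFn_sub, Pi.sub_apply, lp.coeFn_smul, Pi.smul_apply]
          simp [hv_def, smul_eq_mul]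
        rw [this]
      simp only [hfdef, hcoe] at hl1 hl2
      have hdiff : Tendsto (fun n => (s - t) * H n) atTop (nhds (l1 - l2)) := by
        have := hl1.sub hl2
        refine this.congr fun n => ?_
        ring
      have hHtop : Tendsto H atTop atTop := by
        refine Real.tendsto_sum_range_one_div_nat_succ_atTop.congr fun n => ?_
        refine Finset.sum_congr rfl fun i _ => ?_
        rw [one_div]
      have hHinv : Tendsto (fun n => (H n)⁻¹) atTop (nhds 0) :=
        hHtop.inv_tendsto_atTop
      have hmul : Tendsto (fun n => (s - t) * H n * (H n)⁻¹) atTop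
          (nhds ((l1 - l2) * 0)) := hdiff.mul hHinv
      have hev : ∀ᶠ n in atTop, (s - t) * H n * (H n)⁻¹ = s - t := by
        filter_upwards [hHtop.eventually_gt_atTop 0] with n hn
        field_simp
      have : Tendsto (fun _ : ℕ => s - t) atTop (nhds ((l1 - l2) * 0)) :=
        hmul.congr' hev
      have h0 : s - t = (l1 - l2) * 0 := tendsto_nhds_unique tendsto_const_nhds this
      have : s - t = 0 := by simpa using h0
      linarith [this]
    exact measure_mono_null inter_subset_left (hss.measure_zero _)
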